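/- The Cauchy kernel E(x) := (1/σ_m) x^c / |x|^{m+1}, defined on M \ {0} where M is a hypercomplex subspace of a real alternative *-algebra A, is both left and right monogenic: ∑_{s=0}^m vₛ (∂ₛE)(x) = 0 and ∑_{s=0}^m (∂ₛE)(x) vₛ = 0 for all x ≠ 0. Here σ_m is the surface area of the unit sphere in ℝ^{m+1}. -/

import Mathlib

/-- The Cauchy kernel `E(x) = (1/σ_m) xᶜ / |x|^{m+1}` on `M \ {0}`, where `M` is a
hypercomplex subspace of a real alternative `∗`-algebra `A` (multiplication `μ`, unity `e`,
hypercomplex basis `v 0 = e, v 1, …, v m`), is both left and right monogenic: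
`∑ₛ vₛ (∂ₛ E)(x) = 0` and `∑ₛ (∂ₛ E)(x) vₛ = 0` for `x ≠ 0`.  Here
`σ_m = 2 Γ(1/2)^{m+1} / Γ((m+1)/2)` is the surface area of the unit sphere in `ℝ^{m+1}`. -/
theorem cauchy_kernel_monogenic {A : Type*} [NormedAddCommGroup A] [NormedSpace ℝ A]
    [FiniteDimensional ℝ A]
    (μ : A →L[ℝ] A →L[ℝ] A) (e : A)
    (he : ∀ a : A, μ e a = a ∧ μ a e = a)
    (hLA : ∀ a b : A, μ (μ a a) b = μ a (μ a b))
    (hRA : ∀ a b : A, μ (μ a b) b = μ a (μ b b))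
    (m : ℕ) (hm : 1 ≤ m) (v : Fin (m + 1) → A)
    (hv0 : v 0 = e)
    (hvsq : ∀ s, s ≠ 0 → μ (v s) (v s) = -e)
    (hvanti : ∀ s t, s ≠ 0 → t ≠ 0 → s ≠ t → μ (v s) (v t) = -μ (v t) (v s))
    (σ : ℝ) (hσ : σ = 2 * Real.Gamma (1 / 2) ^ (m + 1) / Real.Gamma ((m + 1) / 2))
    (E : ((Fin (m + 1)) → ℝ) → A)
    (hE : E = fun q => (σ * Real.sqrt (∑ s, q s ^ 2) ^ (m + 1))⁻¹ •
      (q 0 • e - ∑ s ∈ Finset.univ \ {0}, q s • v s))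
    (p : (Fin (m + 1)) → ℝ) (hp : p ≠ 0) :
    ∑ s, μ (v s) (fderiv ℝ E p (Pi.single s 1)) = 0 ∧
    ∑ s, μ (fderiv ℝ E p (Pi.single s 1)) (v s) = 0 := by
  classical
  have hσpos : 0 < σ := by
    rw [hσ]
    have h1 : 0 < Real.Gamma (1 / 2) := Real.Gamma_pos_of_pos (by norm_num)
    have h2 : 0 < Real.Gamma ((m + 1) / 2) := Real.Gamma_pos_of_pos (by positivity)
    positivity
  set S : Finset (Fin (m + 1)) := Finset.univ \ {0} with hS
  have hmemS : ∀ s : Fin (m + 1), s ∈ S ↔ s ≠ 0 := by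
    intro s; simp [hS]
  set Q : ℝ := ∑ s, p s ^ 2 with hQ
  have hQpos : 0 < Q := by
    obtain ⟨s, hs⟩ := Function.ne_iff.mp hp
    exact Finset.sum_pos' (fun i _ => sq_nonneg _)
      ⟨s, Finset.mem_univ s, pow_two_pos_of_ne_zero hs⟩
  set r : ℝ := Real.sqrt Q with hr
  have hrpos : 0 < r := Real.sqrt_pos.mpr hQpos
  have hr2 : r ^ 2 = Q := Real.sq_sqrt hQpos.le
  set u : ℝ := σ * r ^ (m + 1) with hu
  have hupos : 0 < u := by positivity
  have hu0 : u ≠ 0 := ne_of_gt hupos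
  -- the linear part as a continuous linear map
  set W : (Fin (m + 1) → ℝ) →L[ℝ] A :=
    (ContinuousLinearMap.proj 0).smulRight e -
      ∑ s ∈ S, (ContinuousLinearMap.proj s).smulRight (v s) with hWdef
  have hW : ∀ q : Fin (m + 1) → ℝ,
      W q = q 0 • e - ∑ s ∈ S, q s • v s := by
    intro q
    simp [hWdef, ContinuousLinearMap.sum_apply]
  -- derivative of the squared norm
  set F' : (Fin (m + 1) → ℝ) →L[ℝ] ℝ :=
    ∑ s, (2 * p s) • (ContinuousLinearMap.proj s : (Fin (m + 1) → ℝ) →L[ℝ] ℝ) with hF'def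
  have hF : HasFDerivAt (fun q : Fin (m + 1) → ℝ => ∑ s, q s ^ 2) F' p := by
    rw [hF'def]
    apply HasFDerivAt.fun_sum
    intro s _
    have hpow : HasDerivAt (fun y : ℝ => y ^ 2) (2 * p s) (p s) := by
      simpa using hasDerivAt_pow 2 (p s)
    have h2 := hpow.comp_hasFDerivAt p (hasFDerivAt_apply (𝕜 := ℝ) s p)
    exact h2
  have hF'single : ∀ s, F' (Pi.single s 1) = 2 * p s := by
    intro s
    rw [hF'def]
    simp only [ContinuousLinearMap.sum_apply, ContinuousLinearMap.smul_apply,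
      ContinuousLinearMap.proj_apply, smul_eq_mul]
    rw [Finset.sum_eq_single s]
    · simp
    · intro t _ hts
      simp [Pi.single_apply, hts.symm]
    · simp
  -- derivative of the scalar coefficient
  have hφ : HasDerivAt (fun y : ℝ => (σ * Real.sqrt y ^ (m + 1))⁻¹)
      (-(σ * (((m : ℝ) + 1) * r ^ (m + 1 - 1) * (1 / (2 * r)))) / u ^ 2) Q := by
    have h1 : HasDerivAt Real.sqrt (1 / (2 * Real.sqrt Q)) Q :=
      Real.hasDerivAt_sqrt hQpos.ne'
    have h2 := (h1.pow (m + 1)).const_mul σ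
    have h3 := h2.inv (show σ * Real.sqrt Q ^ (m + 1) ≠ 0 by rw [← hr]; exact hu0)
    refine h3.congr_deriv ?_
    rw [hr, hu, hr]
    simp only [Pi.pow_apply]
    push_cast
    ring
  set c : ℝ := -(σ * (((m : ℝ) + 1) * r ^ (m + 1 - 1) * (1 / (2 * r)))) / u ^ 2 with hc
  have hg : HasFDerivAt
      (fun q : Fin (m + 1) → ℝ => (σ * Real.sqrt (∑ s, q s ^ 2) ^ (m + 1))⁻¹)
      (c • F') p := hφ.comp_hasFDerivAt (f := fun q : Fin (m + 1) → ℝ => ∑ s, q s ^ 2) p hF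
  -- derivative of E
  have hEfun : E = fun q => (σ * Real.sqrt (∑ s, q s ^ 2) ^ (m + 1))⁻¹ • W q := by
    rw [hE]; funext q; rw [hW]
  have hEderiv : HasFDerivAt E (u⁻¹ • W + (c • F').smulRight (W p)) p := by
    rw [hEfun]
    have h4 := hg.smul W.hasFDerivAt
    exact h4
  have hfd : ∀ s, fderiv ℝ E p (Pi.single s 1)
      = u⁻¹ • W (Pi.single s 1) + (c * (2 * p s)) • W p := by
    intro s
    rw [hEderiv.fderiv]
    simp [hF'single s, mul_smul]
  -- values of W on basis vectors
  have hWs0 : W ((Pi.single 0 1 : Fin (m + 1) → ℝ)) = e := by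
    rw [hW]
    have hz : ∑ s ∈ S, (Pi.single 0 1 : Fin (m + 1) → ℝ) s • v s = 0 := by
      apply Finset.sum_eq_zero
      intro s hs
      have hs0 : s ≠ 0 := (hmemS s).mp hs
      simp [Pi.single_apply, hs0]
    rw [hz]
    simp
  have hWs : ∀ s : Fin (m + 1), s ≠ 0 → W (Pi.single s 1) = -(v s) := by
    intro s hs
    rw [hW]
    have h0 : (Pi.single s 1 : Fin (m + 1) → ℝ) 0 = 0 := by simp [Pi.single_apply, hs]
    rw [h0]
    have hsum : ∑ t ∈ S, (Pi.single s 1 : Fin (m + 1) → ℝ) t • v t = v s := by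
      rw [Finset.sum_eq_single s]
      · simp
      · intro t _ hts; simp [Pi.single_apply, hts.symm]
      · intro h; exact absurd ((hmemS s).mpr hs) h
    rw [hsum]
    simp
  -- the conjugate vector and its mirror
  set x : A := W p with hxdef
  set z : A := ∑ s ∈ S, p s • v s with hz
  have hxz : x = p 0 • e - z := by rw [hxdef, hW, hz]
  set y : A := ∑ s, p s • v s with hy
  have hyz : y = p 0 • e + z := by
    rw [hy, Finset.sum_eq_sum_sdiff_singleton_add (Finset.mem_univ (0 : Fin (m + 1)))]
    rw [hv0, ← hS, ← hz, add_comm]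
  have hQsplit : Q = p 0 ^ 2 + ∑ s ∈ S, p s ^ 2 := by
    rw [hQ, Finset.sum_eq_sum_sdiff_singleton_add (Finset.mem_univ (0 : Fin (m + 1)))]
    rw [← hS, add_comm]
  -- antisymmetric double sums vanish
  have hcross : ∀ f : Fin (m + 1) → Fin (m + 1) → A,
      (∀ s t, s ≠ 0 → t ≠ 0 → s ≠ t → f s t = -f t s) →
      ∑ s ∈ S, ∑ t ∈ S \ {s}, (p s * p t) • f s t = 0 := by
    intro f hanti
    set X : A := ∑ s ∈ S, ∑ t ∈ S \ {s}, (p s * p t) • f s t with hX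
    have hswap : X = ∑ t ∈ S, ∑ s ∈ S \ {t}, (p s * p t) • f s t := by
      rw [hX]
      apply Finset.sum_comm'
      intro a b
      simp only [Finset.mem_sdiff, Finset.mem_singleton]
      constructor
      · rintro ⟨ha, hb, hba⟩; exact ⟨⟨ha, fun h => hba h.symm⟩, hb⟩
      · rintro ⟨⟨ha, hab⟩, hb⟩; exact ⟨ha, hb, fun h => hab h.symm⟩
    have hneg : ∑ t ∈ S, ∑ s ∈ S \ {t}, (p s * p t) • f s t = -X := by
      rw [hX, ← Finset.sum_neg_distrib]
      apply Finset.sum_congr rfl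
      intro t ht
      rw [← Finset.sum_neg_distrib]
      apply Finset.sum_congr rfl
      intro s hs
      have ht0 : t ≠ 0 := (hmemS t).mp ht
      have hsmem := Finset.mem_sdiff.mp hs
      have hs0 : s ≠ 0 := (hmemS s).mp hsmem.1
      have hst : s ≠ t := by simpa using hsmem.2
      rw [hanti s t hs0 ht0 hst, smul_neg, mul_comm]
    have h2 : X + X = 0 := by
      nth_rewrite 1 [hswap]
      rw [hneg]
      simp
    have h3 : (2 : ℝ) • X = 0 := by rw [two_smul]; exact h2
    rcases smul_eq_zero.mp h3 with h | h
    · norm_num at h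
    · exact h
  have hzz : μ z z = (-(∑ s ∈ S, p s ^ 2)) • e := by
    have step1 : μ z z = ∑ s ∈ S, ∑ t ∈ S, (p s * p t) • μ (v s) (v t) := by
      conv_lhs => rw [hz]
      simp only [map_sum, map_smul, ContinuousLinearMap.sum_apply,
        ContinuousLinearMap.smul_apply, ContinuousLinearMap.coe_sum', Finset.sum_apply,
        Finset.smul_sum, smul_smul]
      rw [Finset.sum_comm]
      exact Finset.sum_congr rfl fun s _ => Finset.sum_congr rfl fun t _ => by rw [mul_comm]
    rw [step1]
    have step2 : ∀ s ∈ S, ∑ t ∈ S, (p s * p t) • μ (v s) (v t)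
        = ∑ t ∈ S \ {s}, (p s * p t) • μ (v s) (v t) + (p s ^ 2) • (-e) := by
      intro s hsS
      rw [Finset.sum_eq_sum_sdiff_singleton_add hsS]
      congr 1
      rw [hvsq s ((hmemS s).mp hsS), ← pow_two]
    rw [Finset.sum_congr rfl step2, Finset.sum_add_distrib,
      hcross (fun s t => μ (v s) (v t)) (fun s t hs ht hst => hvanti s t hs ht hst),
      zero_add, ← Finset.sum_smul]
    rw [smul_neg, neg_smul]
  have hmul_e : ∀ a : A, μ e a = a := fun a => (he a).1
  have hmul_e' : ∀ a : A, μ a e = a := fun a => (he a).2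
  have hyx : μ y x = Q • e := by
    rw [hyz, hxz]
    simp only [map_add, map_sub, map_smul, ContinuousLinearMap.add_apply,
      ContinuousLinearMap.sub_apply, ContinuousLinearMap.smul_apply, smul_sub, smul_add,
      hmul_e, hmul_e', hzz]
    rw [hQsplit]
    module
  have hxy : μ x y = Q • e := by
    rw [hyz, hxz]
    simp only [map_add, map_sub, map_smul, ContinuousLinearMap.add_apply,
      ContinuousLinearMap.sub_apply, ContinuousLinearMap.smul_apply, smul_sub, smul_add,
      hmul_e, hmul_e', hzz]
    rw [hQsplit]
    module
  -- the two key linear-combination identities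
  have hBleft : ∑ s, p s • μ (v s) x = Q • e := by
    rw [← hyx, hy, map_sum, ContinuousLinearMap.sum_apply]
    apply Finset.sum_congr rfl
    intro s _
    rw [map_smul, ContinuousLinearMap.smul_apply]
  have hBright : ∑ s, p s • μ x (v s) = Q • e := by
    rw [← hxy, hy, map_sum]
    apply Finset.sum_congr rfl
    intro s _
    rw [map_smul]
  have hcard : S.card = m := by
    rw [hS, Finset.card_sdiff_of_subset (Finset.subset_univ _)]
    simp
  have hAleft : ∑ s, μ (v s) (W (Pi.single s 1)) = ((m : ℝ) + 1) • e := by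
    rw [Finset.sum_eq_sum_sdiff_singleton_add (Finset.mem_univ (0 : Fin (m + 1))), ← hS]
    have h1 : ∀ s ∈ S, μ (v s) (W (Pi.single s 1)) = e := by
      intro s hs
      have hs0 : s ≠ 0 := (hmemS s).mp hs
      rw [hWs s hs0, map_neg, hvsq s hs0, neg_neg]
    rw [Finset.sum_congr rfl h1, hWs0, hv0, (he e).1, Finset.sum_const, hcard]
    rw [add_smul, one_smul, Nat.cast_smul_eq_nsmul]
  have hAright : ∑ s, μ (W (Pi.single s 1)) (v s) = ((m : ℝ) + 1) • e := by
    rw [Finset.sum_eq_sum_sdiff_singleton_add (Finset.mem_univ (0 : Fin (m + 1))), ← hS]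
    have h1 : ∀ s ∈ S, μ (W (Pi.single s 1)) (v s) = e := by
      intro s hs
      have hs0 : s ≠ 0 := (hmemS s).mp hs
      rw [hWs s hs0, map_neg, ContinuousLinearMap.neg_apply, hvsq s hs0, neg_neg]
    rw [Finset.sum_congr rfl h1, hWs0, hv0, (he e).1, Finset.sum_const, hcard]
    rw [add_smul, one_smul, Nat.cast_smul_eq_nsmul]
  -- the key scalar identity
  have hkey : u⁻¹ * ((m : ℝ) + 1) + (c * 2) * Q = 0 := by
    have hm1 : m + 1 - 1 = m := rfl
    rw [hc, hu, ← hr2, hm1]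
    have hrne : r ≠ 0 := hrpos.ne'
    have hσne : σ ≠ 0 := hσpos.ne'
    field_simp
    ring
  constructor
  · calc ∑ s, μ (v s) (fderiv ℝ E p (Pi.single s 1))
        = ∑ s, (u⁻¹ • μ (v s) (W (Pi.single s 1)) + (c * 2) • (p s • μ (v s) x)) := by
          apply Finset.sum_congr rfl
          intro s _
          rw [hfd s]
          simp only [map_add, map_smul, smul_smul]
          rw [mul_assoc]
      _ = u⁻¹ • (((m : ℝ) + 1) • e) + (c * 2) • (Q • e) := by
          rw [Finset.sum_add_distrib, ← Finset.smul_sum, ← Finset.smul_sum, hAleft, hBleft]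
      _ = (u⁻¹ * ((m : ℝ) + 1) + (c * 2) * Q) • e := by
          rw [smul_smul, smul_smul, ← add_smul]
      _ = 0 := by rw [hkey, zero_smul]
  · calc ∑ s, μ (fderiv ℝ E p (Pi.single s 1)) (v s)
        = ∑ s, (u⁻¹ • μ (W (Pi.single s 1)) (v s) + (c * 2) • (p s • μ x (v s))) := by
          apply Finset.sum_congr rfl
          intro s _
          rw [hfd s]
          simp only [map_add, map_smul, ContinuousLinearMap.add_apply,
            ContinuousLinearMap.smul_apply, smul_smul]
          rw [mul_assoc]
      _ = u⁻¹ • (((m : ℝ) + 1) • e) + (c * 2) • (Q • e) := by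
          rw [Finset.sum_add_distrib, ← Finset.smul_sum, ← Finset.smul_sum, hAright, hBright]
      _ = (u⁻¹ * ((m : ℝ) + 1) + (c * 2) * Q) • e := by
          rw [smul_smul, smul_smul, ← add_smul]
      _ = 0 := by rw [hkey, zero_smul]
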